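/- Let (f_n)_{n≥1} be integrable random variables on a probability space with measure-preserving transformations (θ_n), satisfying f_{n+p} ≤ f_n + f_p ∘ θ_n + g_p ∘ θ_n + r_{n,p}, where g_p ≥ 0 with E[g_p]/p → 0, and E[(r_{n,p}^+)^α] ≤ C_p for some α > 1 with Σ_p C_p/p^α < ∞, and c = inf_n E[f_n]/n > -∞. Then E[f_n]/n converges to a finite limit μ. -/

import Mathlib

open MeasureTheory Filter
open scoped ENNReal NNReal

/-- On a probability space, `∫ h ≤ (∫ h^α)^(1/α)` for nonnegative integrable `h`. -/
lemma moment_bound {Ω : Type*} [MeasurableSpace Ω] (μ : Measure Ω) [IsProbabilityMeasure μ]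
    (h : Ω → ℝ) (hint : Integrable h μ) (hnn : ∀ ω, 0 ≤ h ω) (α C : ℝ) (hα : 1 < α)
    (hC : 0 ≤ C) (hb : ∫⁻ ω, ENNReal.ofReal (h ω ^ α) ∂μ ≤ ENNReal.ofReal C) :
    ∫ ω, h ω ∂μ ≤ C ^ α⁻¹ := by
  have hα0 : (0:ℝ) < α := lt_trans one_pos hα
  have h1 : ENNReal.ofReal (∫ ω, h ω ∂μ) = ∫⁻ ω, ENNReal.ofReal (h ω) ∂μ :=
    ofReal_integral_eq_lintegral_ofReal hint (Filter.Eventually.of_forall hnn)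
  have h2 : (∫⁻ ω, ENNReal.ofReal (h ω) ∂μ) = eLpNorm h 1 μ := by
    rw [eLpNorm_one_eq_lintegral_enorm]
    refine lintegral_congr fun ω => ?_
    exact (Real.enorm_eq_ofReal (hnn ω)).symm
  have hαle : (1 : ℝ≥0∞) ≤ ENNReal.ofReal α := by
    rw [show (1 : ℝ≥0∞) = ENNReal.ofReal 1 by simp]
    exact ENNReal.ofReal_le_ofReal hα.le
  have h3 : eLpNorm h 1 μ ≤ eLpNorm h (ENNReal.ofReal α) μ :=
    eLpNorm_le_eLpNorm_of_exponent_le hαle hint.1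
  have hαne : ENNReal.ofReal α ≠ 0 := by
    simp [ENNReal.ofReal_eq_zero, not_le, hα0]
  have h4 : eLpNorm h (ENNReal.ofReal α) μ
      = (∫⁻ ω, ENNReal.ofReal (h ω ^ α) ∂μ) ^ (1 / α) := by
    rw [eLpNorm_eq_lintegral_rpow_enorm_toReal hαne ENNReal.ofReal_ne_top,
      ENNReal.toReal_ofReal hα0.le]
    congr 1
    refine lintegral_congr fun ω => ?_
    rw [Real.enorm_eq_ofReal (hnn ω), ENNReal.ofReal_rpow_of_nonneg (hnn ω) hα0.le]
  have h5 : (∫⁻ ω, ENNReal.ofReal (h ω ^ α) ∂μ) ^ (1 / α)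
      ≤ (ENNReal.ofReal C) ^ (1 / α) :=
    ENNReal.rpow_le_rpow hb (by positivity)
  have h6 : (ENNReal.ofReal C) ^ (1 / α) = ENNReal.ofReal (C ^ (1/α)) :=
    ENNReal.ofReal_rpow_of_nonneg hC (by positivity)
  have : ENNReal.ofReal (∫ ω, h ω ∂μ) ≤ ENNReal.ofReal (C ^ (1/α)) := by
    rw [h1, h2, ← h6]
    exact le_trans h3 (h4 ▸ h5)
  rw [one_div] at this
  calc ∫ ω, h ω ∂μ ≤ C ^ α⁻¹ := by
        by_cases hi : 0 ≤ ∫ ω, h ω ∂μ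
        · exact (ENNReal.ofReal_le_ofReal_iff (by positivity)).mp this
        · exact le_trans (le_of_not_ge hi) (by positivity)

/-- Generalized Fekete lemma: almost subadditive sequences with `o(p)` error converge in
Cesàro sense. -/
lemma fekete_aux (u h : ℕ → ℝ)
    (hsub : ∀ n p, 1 ≤ n → 1 ≤ p → u (n + p) ≤ u n + u p + h p)
    (hh : Tendsto (fun p : ℕ => h p / p) atTop (nhds 0))
    (hbdd : BddBelow (Set.range fun n : ℕ => u (n + 1) / ((n : ℝ) + 1))) :
    ∃ L : ℝ, Tendsto (fun n : ℕ => u n / n) atTop (nhds L) := by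
  -- iteration
  have iter : ∀ p, 1 ≤ p → ∀ q s, 1 ≤ s → u (s + q * p) ≤ u s + q * (u p + h p) := by
    intro p hp q
    induction q with
    | zero => intro s hs; simp
    | succ q ih =>
      intro s hs
      have h1 : u (s + q * p + p) ≤ u (s + q * p) + u p + h p :=
        hsub (s + q * p) p (le_trans hs (Nat.le_add_right _ _)) hp
      have h2 := ih s hs
      have : s + (q + 1) * p = s + q * p + p := by ring
      rw [this]
      push_cast
      nlinarith [h1, h2]
  -- lower bound
  obtain ⟨m, hm⟩ := hbdd
  have hlow : ∀ n : ℕ, 1 ≤ n → m ≤ u n / n := by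
    intro n hn
    obtain ⟨k, rfl⟩ := Nat.exists_eq_add_of_le hn
    have := hm (Set.mem_range_self k)
    simpa [add_comm 1 k, add_comm (k:ℝ) 1] using this
  -- upper bound
  set K := u 1 + h 1 with hK
  have hup : ∀ n : ℕ, 1 ≤ n → u n / n ≤ |u 1| + |K| := by
    intro n hn
    obtain ⟨k, rfl⟩ := Nat.exists_eq_add_of_le hn
    have h1 : u (1 + k * 1) ≤ u 1 + k * K := iter 1 le_rfl k 1 le_rfl
    rw [mul_one] at h1
    have hn' : (0:ℝ) < 1 + k := by positivity
    rw [div_le_iff₀ (by push_cast; positivity)]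
    have hb1 : u 1 ≤ |u 1| := le_abs_self _
    have hb2 : (k:ℝ) * K ≤ k * |K| := by
      apply mul_le_mul_of_nonneg_left (le_abs_self _) (by positivity)
    push_cast
    nlinarith [abs_nonneg (u 1), abs_nonneg K, h1]
  -- boundedness of the sequence n ↦ u n / n
  have hBle : IsBoundedUnder (· ≤ ·) atTop (fun n : ℕ => u n / n) :=
    ⟨|u 1| + |K|, eventually_map.2 (by
      filter_upwards [eventually_ge_atTop 1] with n hn using hup n hn)⟩
  have hBge : IsBoundedUnder (· ≥ ·) atTop (fun n : ℕ => u n / n) :=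
    ⟨m, eventually_map.2 (by
      filter_upwards [eventually_ge_atTop 1] with n hn using hlow n hn)⟩
  -- key limsup bound
  have key : ∀ p : ℕ, 1 ≤ p →
      limsup (fun n : ℕ => u n / n) atTop ≤ (u p + h p) / p := by
    intro p hp
    obtain ⟨X, hX⟩ : ∃ X : ℝ, X = u p + h p := ⟨_, rfl⟩
    have hpne : (Finset.Icc 1 p).Nonempty := ⟨1, by simp [hp]⟩
    obtain ⟨M, hM⟩ : ∃ M : ℝ, ∀ s, 1 ≤ s → s ≤ p → u s ≤ M :=
      ⟨(Finset.Icc 1 p).sup' hpne u,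
        fun s h1 h2 => Finset.le_sup' u (Finset.mem_Icc.2 ⟨h1, h2⟩)⟩
    have hbound : ∀ n : ℕ, 1 ≤ n → u n / n ≤ X / p + (M + |X|) / n := by
      intro n hn
      obtain ⟨q, s, hs1, hsp, hsq⟩ : ∃ q s, 1 ≤ s ∧ s ≤ p ∧ s + q * p = n := by
        refine ⟨(n - 1) / p, (n - 1) % p + 1, Nat.le_add_left 1 _, ?_, ?_⟩
        · have := Nat.mod_lt (n - 1) (show 0 < p from hp)
          omega
        · rw [Nat.mul_comm]
          have := Nat.mod_add_div (n - 1) p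
          omega
      have h1 : u n ≤ u s + q * X := by rw [hX, ← hsq]; exact iter p hp q s hs1
      have h2 : u s ≤ M := hM s hs1 hsp
      -- (q : ℝ) = (n - s) / p
      have hqr : (q : ℝ) * p = (n : ℝ) - s := by
        have h0 : q * p + s = n := by omega
        have h0' : ((q * p + s : ℕ) : ℝ) = n := by rw [h0]
        push_cast at h0'
        linarith
      have hppos : (0:ℝ) < p := by exact_mod_cast hp
      have hnpos : (0:ℝ) < n := by exact_mod_cast hn
      -- q * X ≤ (n/p) * X + |X|
      have h3 : (q:ℝ) * X ≤ (n / p) * X + |X| := by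
        have hqx : (q:ℝ) * X = ((n:ℝ) - s) / p * X := by
          rw [← hqr]; field_simp
        rw [hqx]
        have hsnn : (0:ℝ) ≤ s := by positivity
        have hsle : (s:ℝ) ≤ p := by exact_mod_cast hsp
        have : ((n:ℝ) - s) / p * X = (n / p) * X - (s / p) * X := by ring
        rw [this]
        have habs : -((s:ℝ) / p * X) ≤ |X| := by
          have h4 : |(s:ℝ) / p * X| ≤ |X| := by
            rw [abs_mul]
            have : |(s:ℝ)/p| ≤ 1 := by
              rw [abs_of_nonneg (by positivity)]
              rw [div_le_one hppos]; exact hsle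
            nlinarith [abs_nonneg X]
          linarith [neg_abs_le ((s:ℝ)/p * X)]
        linarith
      have h5 : u n ≤ M + (n / p) * X + |X| := by linarith
      rw [div_le_iff₀ hnpos]
      have : (X / p + (M + |X|) / n) * n = (n / p) * X + (M + |X|) := by
        field_simp
      rw [this]
      linarith
    have hv : Tendsto (fun n : ℕ => X / p + (M + |X|) / n) atTop (nhds (X / p)) := by
      have h0 : Tendsto (fun n : ℕ => (M + |X|) / (n : ℝ)) atTop (nhds 0) :=
        Tendsto.div_atTop tendsto_const_nhds tendsto_natCast_atTop_atTop
      simpa using tendsto_const_nhds.add h0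
    have hle : limsup (fun n : ℕ => u n / n) atTop
        ≤ limsup (fun n : ℕ => X / p + (M + |X|) / n) atTop := by
      apply limsup_le_limsup
      · filter_upwards [eventually_ge_atTop 1] with n hn using hbound n hn
      · exact hBge.isCoboundedUnder_le
      · exact hv.isBoundedUnder_le
    rw [hv.limsup_eq, hX] at hle
    exact hle
  set L := liminf (fun n : ℕ => u n / n) atTop with hL
  have hsup_le : limsup (fun n : ℕ => u n / n) atTop ≤ L := by
    refine le_of_forall_pos_le_add fun ε hε => ?_
    have hfreq : ∃ᶠ p in atTop, u p / p < L + ε / 2 :=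
      frequently_lt_of_liminf_lt hBle.isCoboundedUnder_ge (by linarith : L < L + ε / 2)
    have hev : ∀ᶠ p : ℕ in atTop, h p / p < ε / 2 ∧ 1 ≤ p := by
      filter_upwards [hh.eventually (gt_mem_nhds (by linarith : (0:ℝ) < ε / 2)),
        eventually_ge_atTop 1] with p h1 h2
      exact ⟨h1, h2⟩
    obtain ⟨p, hp1, hp2, hp3⟩ := (hfreq.and_eventually hev).exists
    calc limsup (fun n : ℕ => u n / n) atTop ≤ (u p + h p) / p := key p hp3
      _ = u p / p + h p / p := add_div _ _ _
      _ ≤ L + ε := by linarith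
  have hinf_le : L ≤ limsup (fun n : ℕ => u n / n) atTop := liminf_le_limsup hBle hBge
  exact ⟨L, tendsto_of_liminf_eq_limsup rfl (le_antisymm hsup_le hinf_le) hBle hBge⟩

/-- The expectation part of the almost subadditive ergodic theorem:
`E[f n] / n` converges to a finite limit. -/
theorem almost_subadditive_expectation_converges {Ω : Type*} [MeasurableSpace Ω]
    (μ : Measure Ω) [IsProbabilityMeasure μ]
    (θ : ℕ → Ω → Ω) (hθ : ∀ n, MeasurePreserving (θ n) μ μ)
    (f g : ℕ → Ω → ℝ) (r : ℕ → ℕ → Ω → ℝ)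
    (hf : ∀ n, Integrable (f n) μ)
    (hg0 : ∀ p ω, 0 ≤ g p ω) (hgint : ∀ p, Integrable (g p) μ)
    (hgE : Tendsto (fun p : ℕ => (∫ ω, g p ω ∂μ) / p) atTop (nhds 0))
    (α : ℝ) (hα : 1 < α) (C : ℕ → ℝ) (hC0 : ∀ p, 0 ≤ C p)
    (hr : ∀ n p, 1 ≤ n → 1 ≤ p →
      ∫⁻ ω, ENNReal.ofReal (max (r n p ω) 0 ^ α) ∂μ ≤ ENNReal.ofReal (C p))
    (hCsum : Summable fun p : ℕ => C p / (p : ℝ) ^ α)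
    (hsub : ∀ n p, 1 ≤ n → 1 ≤ p → ∀ ω,
      f (n + p) ω ≤ f n ω + f p (θ n ω) + g p (θ n ω) + r n p ω)
    (hc : BddBelow (Set.range fun n : ℕ => (∫ ω, f (n + 1) ω ∂μ) / (n + 1))) :
    ∃ L : ℝ, Tendsto (fun n : ℕ => (∫ ω, f n ω ∂μ) / n) atTop (nhds L) := by
  have hα0 : (0:ℝ) < α := lt_trans one_pos hα
  set u : ℕ → ℝ := fun n => ∫ ω, f n ω ∂μ with hu
  set h : ℕ → ℝ := fun p => (∫ ω, g p ω ∂μ) + C p ^ α⁻¹ with hh'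
  -- comp integrability and integral identities
  have hcompint : ∀ n p, Integrable (fun ω => f p (θ n ω)) μ := fun n p =>
    ((hθ n).integrable_comp (hf p).1).mpr (hf p)
  have hgcompint : ∀ n p, Integrable (fun ω => g p (θ n ω)) μ := fun n p =>
    ((hθ n).integrable_comp (hgint p).1).mpr (hgint p)
  have hcompeq : ∀ n p, ∫ ω, f p (θ n ω) ∂μ = u p := by
    intro n p
    rw [hu]
    rw [← integral_map (hθ n).measurable.aemeasurable
      (((hθ n).map_eq).symm ▸ (hf p).1), (hθ n).map_eq]
  have hgcompeq : ∀ n p, ∫ ω, g p (θ n ω) ∂μ = ∫ ω, g p ω ∂μ := by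
    intro n p
    rw [← integral_map (hθ n).measurable.aemeasurable
      (((hθ n).map_eq).symm ▸ (hgint p).1), (hθ n).map_eq]
  -- subadditivity of u
  have husub : ∀ n p, 1 ≤ n → 1 ≤ p → u (n + p) ≤ u n + u p + h p := by
    intro n p hn hp
    set F : Ω → ℝ := fun ω => f n ω + f p (θ n ω) + g p (θ n ω) with hF
    have hint1 : Integrable (fun ω => f n ω + f p (θ n ω)) μ := (hf n).add (hcompint n p)
    have hFint : Integrable F μ := hint1.add (hgcompint n p)
    set D : Ω → ℝ := fun ω => f (n + p) ω - F ω with hD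
    have hDint : Integrable D μ := (hf (n + p)).sub hFint
    set Dp : Ω → ℝ := fun ω => max (D ω) 0 with hDp
    have hDpint : Integrable Dp μ := hDint.pos_part
    have hDpnn : ∀ ω, 0 ≤ Dp ω := fun ω => le_max_right _ _
    have hDple : ∀ ω, Dp ω ≤ max (r n p ω) 0 := fun ω =>
      max_le_max (by have := hsub n p hn hp ω; simp only [hD, hF]; linarith) le_rfl
    have hmom : ∫⁻ ω, ENNReal.ofReal (Dp ω ^ α) ∂μ ≤ ENNReal.ofReal (C p) := by
      refine le_trans (lintegral_mono fun ω => ?_) (hr n p hn hp)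
      exact ENNReal.ofReal_le_ofReal
        (Real.rpow_le_rpow (hDpnn ω) (hDple ω) hα0.le)
    have hDpbound : ∫ ω, Dp ω ∂μ ≤ C p ^ α⁻¹ :=
      moment_bound μ Dp hDpint hDpnn α (C p) hα (hC0 p) hmom
    have hDle : ∫ ω, D ω ∂μ ≤ ∫ ω, Dp ω ∂μ :=
      integral_mono hDint hDpint fun ω => le_max_left _ _
    have hDeq : ∫ ω, D ω ∂μ = u (n + p) - (u n + u p + ∫ ω, g p ω ∂μ) := by
      have e0 : ∫ ω, D ω ∂μ = ∫ ω, (f (n + p) ω - F ω) ∂μ := rfl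
      rw [e0, integral_sub (hf (n + p)) hFint]
      have e1 : ∫ ω, F ω ∂μ = ∫ ω, (f n ω + f p (θ n ω) + g p (θ n ω)) ∂μ := rfl
      have : ∫ ω, F ω ∂μ = u n + u p + ∫ ω, g p ω ∂μ := by
        rw [e1, integral_add hint1 (hgcompint n p),
          integral_add (hf n) (hcompint n p), hcompeq, hgcompeq]
      rw [this]
    rw [hh']
    have := hDeq ▸ (hDle.trans hDpbound)
    linarith
  -- h p / p → 0
  have hhtend : Tendsto (fun p : ℕ => h p / p) atTop (nhds 0) := by
    have hC1 : Tendsto (fun p : ℕ => C p / (p : ℝ) ^ α) atTop (nhds 0) :=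
      hCsum.tendsto_atTop_zero
    have hC2 : Tendsto (fun p : ℕ => (C p / (p : ℝ) ^ α) ^ α⁻¹) atTop (nhds 0) := by
      have := hC1.rpow_const (p := α⁻¹) (Or.inr (by positivity))
      rwa [Real.zero_rpow (by positivity)] at this
    have hC3 : Tendsto (fun p : ℕ => C p ^ α⁻¹ / p) atTop (nhds 0) := by
      refine hC2.congr' ?_
      filter_upwards [eventually_ge_atTop 1] with p hp
      have hppos : (0:ℝ) < p := by exact_mod_cast hp
      rw [Real.div_rpow (hC0 p) (by positivity), ← Real.rpow_mul hppos.le,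
        mul_inv_cancel₀ (ne_of_gt hα0), Real.rpow_one]
    have := hgE.add hC3
    simp only [add_zero] at this
    refine this.congr fun p => ?_
    simp [hh', add_div]
  -- apply Fekete
  have hbdd : BddBelow (Set.range fun n : ℕ => u (n + 1) / ((n : ℝ) + 1)) := by
    exact hc
  exact fekete_aux u h husub hhtend hbdd
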